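/- For all natural numbers n and k, ∫_ℝ x^{n+2k} · fₙ(x) dx = (−1)^n · √(2π) · (n+2k)! / (2^k · k!), and ∫_ℝ x^{j} · fₙ(x) dx = 0 whenever j − n is odd or j < n, where fₙ denotes the n-th derivative of x ↦ exp(−x²/2). Thus the moment sequence of the n-th classical eigenfunction is, up to the scalar (−1)^n·n·√(2π), the sequence a_{n+2k,n} = (n+2k)!/(n·k!·2^k). -/

import Mathlib

open MeasureTheory Real
open Polynomial in
section

/-- `gaussDeriv n` is the `n`-th derivative of `x ↦ exp (-x²/2)`. -/
noncomputable def gaussDeriv (n : ℕ) : ℝ → ℝ :=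
  iteratedDeriv n (fun x : ℝ => Real.exp (-(x ^ 2) / 2))

open Polynomial

lemma gaussDeriv_eq (n : ℕ) (x : ℝ) :
    gaussDeriv n x = (-1 : ℝ) ^ n * aeval x (hermite n) * Real.exp (-(x ^ 2 / 2)) := by
  have h : gaussDeriv n = deriv^[n] (fun y : ℝ => Real.exp (-(y ^ 2 / 2))) := by
    rw [gaussDeriv, iteratedDeriv_eq_iterate]
    congr 1
    funext y
    rw [neg_div]
  rw [h, Polynomial.deriv_gaussian_eq_hermite_mul_gaussian]

lemma integrable_pow_gauss (i : ℕ) :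
    Integrable (fun x : ℝ => x ^ i * Real.exp (-(x ^ 2 / 2))) := by
  have hb : (0 : ℝ) < 1/2 := by norm_num
  have := integrable_rpow_mul_exp_neg_mul_sq hb
    (s := (i : ℝ)) (by exact_mod_cast neg_one_lt_zero.trans_le (Nat.cast_nonneg i))
  refine this.congr (Filter.Eventually.of_forall fun x => ?_)
  simp only []
  rw [Real.rpow_natCast]
  ring_nf

lemma integrable_poly_gauss (p : Polynomial ℝ) :
    Integrable (fun x : ℝ => aeval x p * Real.exp (-(x ^ 2 / 2))) := by
  induction p using Polynomial.induction_on' with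
  | add p q hp hq =>
      refine (hp.add hq).congr (Filter.Eventually.of_forall fun x => ?_)
      simp [map_add]; ring
  | monomial i a =>
      refine ((integrable_pow_gauss i).const_mul a).congr
        (Filter.Eventually.of_forall fun x => ?_)
      simp [Polynomial.aeval_monomial]; ring

lemma integrable_pow_mul_gaussDeriv (m n : ℕ) :
    Integrable (fun x : ℝ => x ^ m * gaussDeriv n x) := by
  refine ((integrable_poly_gauss
      ((X : ℝ[X]) ^ m * (hermite n).map (algebraMap ℤ ℝ))).const_mul ((-1 : ℝ) ^ n)).congr
    (Filter.Eventually.of_forall fun x => ?_)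
  simp only [gaussDeriv_eq, map_mul, map_pow, aeval_X, Polynomial.aeval_map_algebraMap]
  ring

lemma hasDerivAt_gaussDeriv (n : ℕ) (x : ℝ) :
    HasDerivAt (gaussDeriv n) (gaussDeriv (n + 1) x) x := by
  have hdiff : Differentiable ℝ (gaussDeriv n) := by
    have : gaussDeriv n = fun x : ℝ =>
        (-1 : ℝ) ^ n * aeval x (hermite n) * Real.exp (-(x ^ 2 / 2)) := by
      funext y; exact gaussDeriv_eq n y
    rw [this]
    exact (((Polynomial.differentiable_aeval _).const_mul _).mul
      (Differentiable.exp (by fun_prop)))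
  have h1 : gaussDeriv (n + 1) x = deriv (gaussDeriv n) x := by
    rw [gaussDeriv, iteratedDeriv_succ]; rfl
  rw [h1]
  exact (hdiff x).hasDerivAt

lemma integral_gaussDeriv_succ (n : ℕ) : ∫ x : ℝ, gaussDeriv (n + 1) x = 0 := by
  have h := MeasureTheory.integral_mul_deriv_eq_deriv_mul_of_integrable
    (u := fun _ : ℝ => (1 : ℝ)) (u' := fun _ : ℝ => (0 : ℝ))
    (v := gaussDeriv n) (v' := gaussDeriv (n + 1))
    (fun x _ => hasDerivAt_const x 1) (fun x _ => hasDerivAt_gaussDeriv n x)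
    ((integrable_pow_mul_gaussDeriv 0 (n + 1)).congr
      (Filter.Eventually.of_forall fun x => by simp [Pi.mul_apply]))
    (by simp [Pi.mul_def])
    ((integrable_pow_mul_gaussDeriv 0 n).congr
      (Filter.Eventually.of_forall fun x => by simp [Pi.mul_apply]))
  simpa using h

lemma gaussDeriv_rec (n j : ℕ) :
    ∫ x : ℝ, x ^ (j + 1) * gaussDeriv (n + 1) x
      = -(j + 1 : ℝ) * ∫ x : ℝ, x ^ j * gaussDeriv n x := by
  have h := MeasureTheory.integral_mul_deriv_eq_deriv_mul_of_integrable
    (u := fun x : ℝ => x ^ (j + 1)) (u' := fun x : ℝ => (j + 1 : ℝ) * x ^ j)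
    (v := gaussDeriv n) (v' := gaussDeriv (n + 1))
    (fun x _ => by simpa using hasDerivAt_pow (j + 1) x)
    (fun x _ => hasDerivAt_gaussDeriv n x)
    (integrable_pow_mul_gaussDeriv (j + 1) (n + 1))
    (((integrable_pow_mul_gaussDeriv j n).const_mul ((j : ℝ) + 1)).congr
      (Filter.Eventually.of_forall fun x => by
        show ((j : ℝ) + 1) * (x ^ j * gaussDeriv n x)
          = ((j : ℝ) + 1) * x ^ j * gaussDeriv n x
        ring))
    (integrable_pow_mul_gaussDeriv (j + 1) n)
  rw [show (∫ x : ℝ, x ^ (j + 1) * gaussDeriv (n + 1) x)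
      = ∫ x : ℝ, (fun x : ℝ => x ^ (j + 1)) x * gaussDeriv (n + 1) x from rfl, h,
    ← integral_neg, ← integral_const_mul]
  congr 1; funext x; ring

lemma gaussDeriv_zero_eq (x : ℝ) : gaussDeriv 0 x = Real.exp (-(x ^ 2 / 2)) := by
  rw [gaussDeriv, iteratedDeriv_zero, neg_div]

lemma gaussDeriv_one_eq (x : ℝ) : gaussDeriv 1 x = -x * gaussDeriv 0 x := by
  rw [gaussDeriv_eq, gaussDeriv_zero_eq, hermite_one, aeval_X]
  ring

lemma integral_gaussDeriv_zero : ∫ x : ℝ, gaussDeriv 0 x = Real.sqrt (2 * π) := by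
  have h := integral_gaussian (1/2 : ℝ)
  rw [show π / (1/2 : ℝ) = 2 * π by ring] at h
  rw [← h]
  congr 1
  funext x
  rw [gaussDeriv_zero_eq]
  ring_nf

lemma rec0 (j : ℕ) :
    ∫ x : ℝ, x ^ (j + 2) * gaussDeriv 0 x
      = ((j : ℝ) + 1) * ∫ x : ℝ, x ^ j * gaussDeriv 0 x := by
  have h := gaussDeriv_rec 0 j
  have h2 : ∫ x : ℝ, x ^ (j + 1) * gaussDeriv 1 x
      = -∫ x : ℝ, x ^ (j + 2) * gaussDeriv 0 x := by
    rw [← integral_neg]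
    congr 1
    funext x
    rw [gaussDeriv_one_eq]
    ring
  rw [h2] at h
  have h3 : -∫ x : ℝ, x ^ (j + 2) * gaussDeriv 0 x
      = -(((j : ℝ) + 1) * ∫ x : ℝ, x ^ j * gaussDeriv 0 x) := by
    rw [h]; ring
  exact neg_injective h3

lemma even0 (k : ℕ) :
    ∫ x : ℝ, x ^ (2 * k) * gaussDeriv 0 x
      = Real.sqrt (2 * π) * (2 * k).factorial / (2 ^ k * k.factorial) := by
  induction k with
  | zero => simpa using integral_gaussDeriv_zero
  | succ k ih =>
      have h := rec0 (2 * k)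
      rw [show 2 * k + 2 = 2 * (k + 1) from by ring] at h
      rw [h, ih]
      have e1 : (2 * (k + 1)) = (2 * k + 1) + 1 := by ring
      rw [e1, Nat.factorial_succ, Nat.factorial_succ, pow_succ, Nat.factorial_succ]
      push_cast
      have h2 : (2 : ℝ) ^ k ≠ 0 := by positivity
      have h3 : (k.factorial : ℝ) ≠ 0 := by exact_mod_cast k.factorial_ne_zero
      field_simp
      ring

lemma odd0 (m : ℕ) : ∫ x : ℝ, x ^ (2 * m + 1) * gaussDeriv 0 x = 0 := by
  induction m with
  | zero =>
      have h2 : ∫ x : ℝ, x ^ (2 * 0 + 1) * gaussDeriv 0 x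
          = -∫ x : ℝ, gaussDeriv 1 x := by
        rw [← integral_neg]
        congr 1
        funext x
        rw [gaussDeriv_one_eq]
        ring
      rw [h2, integral_gaussDeriv_succ 0, neg_zero]
  | succ m ih =>
      have h := rec0 (2 * m + 1)
      rw [show 2 * m + 1 + 2 = 2 * (m + 1) + 1 from by ring] at h
      rw [h, ih, mul_zero]

lemma evenMoment (n k : ℕ) :
    ∫ x : ℝ, x ^ (n + 2 * k) * gaussDeriv n x =
      (-1 : ℝ) ^ n * Real.sqrt (2 * Real.pi) * (n + 2 * k).factorial /
        (2 ^ k * k.factorial) := by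
  induction n with
  | zero => simpa using even0 k
  | succ n ih =>
      have h := gaussDeriv_rec n (n + 2 * k)
      rw [show n + 1 + 2 * k = n + 2 * k + 1 from by ring, h, ih,
        Nat.factorial_succ]
      have h2 : (2 : ℝ) ^ k * k.factorial ≠ 0 := by positivity
      push_cast
      field_simp
      ring

lemma vanish (n : ℕ) : ∀ j : ℕ, (j % 2 ≠ n % 2 ∨ j < n) →
    ∫ x : ℝ, x ^ j * gaussDeriv n x = 0 := by
  induction n with
  | zero =>
      intro j hj
      have hodd : j % 2 = 1 := by omega
      obtain ⟨m, rfl⟩ : ∃ m, j = 2 * m + 1 := ⟨j / 2, by omega⟩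
      exact odd0 m
  | succ n ih =>
      intro j hj
      cases j with
      | zero =>
          simpa using integral_gaussDeriv_succ n
      | succ j =>
          rw [gaussDeriv_rec n j, ih j (by omega), mul_zero]

/-- Moments of the `n`-th classical eigenfunction `fₙ` (the `n`-th derivative of the
Gaussian): `∫ x^{n+2k} fₙ(x) dx = (−1)^n √(2π) (n+2k)!/(2^k k!)`, and the `j`-th moment
vanishes whenever `j − n` is odd (i.e. `j` and `n` have different parity) or `j < n`. -/
theorem gaussDeriv_moments (n k : ℕ) :
    (∫ x : ℝ, x ^ (n + 2 * k) * gaussDeriv n x =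
      (-1 : ℝ) ^ n * Real.sqrt (2 * Real.pi) * (n + 2 * k).factorial /
        (2 ^ k * k.factorial)) ∧
    ∀ j : ℕ, (j % 2 ≠ n % 2 ∨ j < n) → ∫ x : ℝ, x ^ j * gaussDeriv n x = 0 := by
  exact ⟨evenMoment n k, vanish n⟩

end
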